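/- Let 𝔤 = 𝔨₂₃⁰ be the six-dimensional real Lie algebra with basis f₁,…,f₆ and nonzero brackets [f₆,f₁] = -f₂, [f₆,f₂] = f₁, [f₆,f₄] = f₃. Then 𝔤 admits no generalized Kähler structure: there exists no triple (J₊,J₋,g) with (J₊,g) and (J₋,g) Hermitian structures satisfying dᶜ₊ω₊ + dᶜ₋ω₋ = 0 and d(dᶜ₊ω₊) = 0. -/

import Mathlib

noncomputable section

/-- The underlying vector space of a six-dimensional real Lie algebra. -/
abbrev V6 : Type := Fin 6 → ℝ

/-- The Lie bracket of the almost abelian Lie algebra determined by the matrix `A` of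
`ad_{f₆}` (column `j` of `A` lists the coordinates of `[f₆, f_{j+1}]`; the ideal
`span{f₁,…,f₅}` is abelian). -/
def braa (A : Matrix (Fin 6) (Fin 6) ℝ) : V6 →ₗ[ℝ] V6 →ₗ[ℝ] V6 :=
  LinearMap.mk₂ ℝ (fun x y => x 5 • A.mulVec y - y 5 • A.mulVec x)
    (by intro x x' y; simp [Matrix.mulVec_add, Pi.add_apply, add_smul, smul_add]; module)
    (by intro c x y; simp [Matrix.mulVec_smul, Pi.smul_apply, smul_eq_mul, mul_smul]; module)
    (by intro x y y'; simp [Matrix.mulVec_add, smul_add, add_smul]; module)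
    (by intro c x y; simp [Matrix.mulVec_smul, Pi.smul_apply, smul_eq_mul, mul_smul]; module)

/-- The bilinear form on `V6` determined by a matrix `G`. -/
def gOf (G : Matrix (Fin 6) (Fin 6) ℝ) : V6 →ₗ[ℝ] V6 →ₗ[ℝ] ℝ :=
  LinearMap.mk₂ ℝ (fun x y => dotProduct x (G.mulVec y))
    (by intro x x' y; simp [add_dotProduct])
    (by intro c x y; simp [smul_dotProduct, smul_eq_mul])
    (by intro x y y'; simp [Matrix.mulVec_add, dotProduct_add])
    (by intro c x y; simp [Matrix.mulVec_smul, dotProduct_smul, smul_eq_mul])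

/-- The standard inner product, making `f₁,…,f₆` orthonormal. -/
def gstd : V6 →ₗ[ℝ] V6 →ₗ[ℝ] ℝ := gOf 1

/-- The linear endomorphism of `V6` determined by a matrix. -/
def endOf (M : Matrix (Fin 6) (Fin 6) ℝ) : V6 →ₗ[ℝ] V6 := Matrix.toLin' M

/-- `br` is a Lie bracket: antisymmetric and satisfying the Jacobi identity
(bilinearity is built into the type). -/
def IsBracket (br : V6 →ₗ[ℝ] V6 →ₗ[ℝ] V6) : Prop :=
  (∀ x y, br x y = - br y x) ∧
  (∀ x y z, br (br x y) z + br (br y z) x + br (br z x) y = 0)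

/-- The Lie algebra has an abelian ideal of codimension one. -/
def IsAlmostAbelian (br : V6 →ₗ[ℝ] V6 →ₗ[ℝ] V6) : Prop :=
  ∃ h : Submodule ℝ V6, Module.finrank ℝ h = 5 ∧
    (∀ x ∈ h, ∀ y ∈ h, br x y = 0) ∧ (∀ x : V6, ∀ y ∈ h, br x y ∈ h)

/-- Nilpotency of the Lie algebra: some length of iterated brackets
`[x₁,[x₂,…,[xₙ,y]…]]` always vanishes. -/
def IsNilpotentBr (br : V6 →ₗ[ℝ] V6 →ₗ[ℝ] V6) : Prop :=
  ∃ n : ℕ, ∀ x : Fin n → V6, ∀ y : V6, (List.ofFn x).foldr (fun a b => br a b) y = 0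

/-- The Nijenhuis tensor of `J`. -/
def Nij (br : V6 →ₗ[ℝ] V6 →ₗ[ℝ] V6) (J : V6 →ₗ[ℝ] V6) (x y : V6) : V6 :=
  br (J x) (J y) - br x y - J (br (J x) y) - J (br x (J y))

/-- A complex structure: `J ∘ J = -id` with vanishing Nijenhuis tensor. -/
def IsCpxStr (br : V6 →ₗ[ℝ] V6 →ₗ[ℝ] V6) (J : V6 →ₗ[ℝ] V6) : Prop :=
  (∀ x, J (J x) = -x) ∧ (∀ x y, Nij br J x y = 0)

/-- A Hermitian structure: a complex structure together with a positive-definite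
compatible inner product. -/
def IsHermStr (br : V6 →ₗ[ℝ] V6 →ₗ[ℝ] V6) (J : V6 →ₗ[ℝ] V6)
    (g : V6 →ₗ[ℝ] V6 →ₗ[ℝ] ℝ) : Prop :=
  IsCpxStr br J ∧ (∀ x y, g x y = g y x) ∧ (∀ x, x ≠ 0 → 0 < g x x) ∧
    (∀ x y, g (J x) (J y) = g x y)

/-- The fundamental form `ω = g(J·,·)`. -/
def fund (J : V6 →ₗ[ℝ] V6) (g : V6 →ₗ[ℝ] V6 →ₗ[ℝ] ℝ) : V6 → V6 → ℝ :=
  fun x y => g (J x) y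

/-- The Chevalley–Eilenberg differential of a 2-form. -/
def d2 (br : V6 →ₗ[ℝ] V6 →ₗ[ℝ] V6) (ω : V6 → V6 → ℝ) : V6 → V6 → V6 → ℝ :=
  fun x y z => -ω (br x y) z + ω (br x z) y - ω (br y z) x

/-- The Chevalley–Eilenberg differential of a 3-form. -/
def d3 (br : V6 →ₗ[ℝ] V6 →ₗ[ℝ] V6) (H : V6 → V6 → V6 → ℝ) : V6 → V6 → V6 → V6 → ℝ :=
  fun x y z w => -H (br x y) z w + H (br x z) y w - H (br x w) y z
    - H (br y z) x w + H (br y w) x z - H (br z w) x y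

/-- The form `dᶜω`, where `dᶜω(X,Y,Z) = dω(JX,JY,JZ)` and `ω = g(J·,·)`. -/
def dC (br : V6 →ₗ[ℝ] V6 →ₗ[ℝ] V6) (J : V6 →ₗ[ℝ] V6)
    (g : V6 →ₗ[ℝ] V6 →ₗ[ℝ] ℝ) : V6 → V6 → V6 → ℝ :=
  fun x y z => d2 br (fund J g) (J x) (J y) (J z)

/-- A Kähler structure: a Hermitian structure with closed fundamental form. -/
def IsKahlerStr (br : V6 →ₗ[ℝ] V6 →ₗ[ℝ] V6) (J : V6 →ₗ[ℝ] V6)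
    (g : V6 →ₗ[ℝ] V6 →ₗ[ℝ] ℝ) : Prop :=
  IsHermStr br J g ∧ ∀ x y z, d2 br (fund J g) x y z = 0

/-- An SKT (pluriclosed) structure: a Hermitian structure with `d(dᶜω) = 0`. -/
def IsSKTStr (br : V6 →ₗ[ℝ] V6 →ₗ[ℝ] V6) (J : V6 →ₗ[ℝ] V6)
    (g : V6 →ₗ[ℝ] V6 →ₗ[ℝ] ℝ) : Prop :=
  IsHermStr br J g ∧ ∀ x y z w, d3 br (dC br J g) x y z w = 0

/-- A generalized Kähler structure `(J₊, J₋, g)`. -/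
def IsGenKahler (br : V6 →ₗ[ℝ] V6 →ₗ[ℝ] V6) (Jp Jm : V6 →ₗ[ℝ] V6)
    (g : V6 →ₗ[ℝ] V6 →ₗ[ℝ] ℝ) : Prop :=
  IsHermStr br Jp g ∧ IsHermStr br Jm g ∧
    (∀ x y z, dC br Jp g x y z + dC br Jm g x y z = 0) ∧
    (∀ x y z w, d3 br (dC br Jp g) x y z w = 0)

/-- Unimodularity: every adjoint operator is traceless. -/
def Unimodular (br : V6 →ₗ[ℝ] V6 →ₗ[ℝ] V6) : Prop :=
  ∀ x : V6, LinearMap.trace ℝ V6 (br x) = 0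

/-- Isomorphism of Lie algebra structures on `V6`. -/
def LieIso (br br' : V6 →ₗ[ℝ] V6 →ₗ[ℝ] V6) : Prop :=
  ∃ φ : V6 ≃ₗ[ℝ] V6, ∀ x y, φ (br x y) = br' (φ x) (φ y)

/-- The basis 3-form `fⁱ ∧ fʲ ∧ f^k`. -/
def tri (i j k : Fin 6) : V6 → V6 → V6 → ℝ := fun x y z =>
  Matrix.det !![x i, x j, x k; y i, y j, y k; z i, z j, z k]

/-- The Lie algebra `𝔨₂₃^p`. -/
def k23 (p : ℝ) : V6 →ₗ[ℝ] V6 →ₗ[ℝ] V6 :=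
  braa !![p,1,0,0,0,0; -1,p,0,0,0,0; 0,0,0,1,0,0; 0,0,0,0,0,0; 0,0,0,0,0,0; 0,0,0,0,0,0]

namespace GK

def E0 : V6 := ![1,0,0,0,0,0]
def E1 : V6 := ![0,1,0,0,0,0]
def E2 : V6 := ![0,0,1,0,0,0]
def E3 : V6 := ![0,0,0,1,0,0]
def E4 : V6 := ![0,0,0,0,1,0]
def E5 : V6 := ![0,0,0,0,0,1]

@[simp] lemma at0 (a b c d e f : ℝ) : (![a,b,c,d,e,f] : V6) 0 = a := rfl
@[simp] lemma at1 (a b c d e f : ℝ) : (![a,b,c,d,e,f] : V6) 1 = b := rfl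
@[simp] lemma at2 (a b c d e f : ℝ) : (![a,b,c,d,e,f] : V6) 2 = c := rfl
@[simp] lemma at3 (a b c d e f : ℝ) : (![a,b,c,d,e,f] : V6) 3 = d := rfl
@[simp] lemma at4 (a b c d e f : ℝ) : (![a,b,c,d,e,f] : V6) 4 = e := rfl
@[simp] lemma at5 (a b c d e f : ℝ) : (![a,b,c,d,e,f] : V6) 5 = f := rfl

@[simp] lemma E0at0 : E0 0 = 1 := rfl
@[simp] lemma E0at1 : E0 1 = 0 := rfl
@[simp] lemma E0at2 : E0 2 = 0 := rfl
@[simp] lemma E0at3 : E0 3 = 0 := rfl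
@[simp] lemma E0at4 : E0 4 = 0 := rfl
@[simp] lemma E0at5 : E0 5 = 0 := rfl
@[simp] lemma E1at0 : E1 0 = 0 := rfl
@[simp] lemma E1at1 : E1 1 = 1 := rfl
@[simp] lemma E1at2 : E1 2 = 0 := rfl
@[simp] lemma E1at3 : E1 3 = 0 := rfl
@[simp] lemma E1at4 : E1 4 = 0 := rfl
@[simp] lemma E1at5 : E1 5 = 0 := rfl
@[simp] lemma E2at0 : E2 0 = 0 := rfl
@[simp] lemma E2at1 : E2 1 = 0 := rfl
@[simp] lemma E2at2 : E2 2 = 1 := rfl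
@[simp] lemma E2at3 : E2 3 = 0 := rfl
@[simp] lemma E2at4 : E2 4 = 0 := rfl
@[simp] lemma E2at5 : E2 5 = 0 := rfl
@[simp] lemma E3at0 : E3 0 = 0 := rfl
@[simp] lemma E3at1 : E3 1 = 0 := rfl
@[simp] lemma E3at2 : E3 2 = 0 := rfl
@[simp] lemma E3at3 : E3 3 = 1 := rfl
@[simp] lemma E3at4 : E3 4 = 0 := rfl
@[simp] lemma E3at5 : E3 5 = 0 := rfl
@[simp] lemma E4at0 : E4 0 = 0 := rfl
@[simp] lemma E4at1 : E4 1 = 0 := rfl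
@[simp] lemma E4at2 : E4 2 = 0 := rfl
@[simp] lemma E4at3 : E4 3 = 0 := rfl
@[simp] lemma E4at4 : E4 4 = 1 := rfl
@[simp] lemma E4at5 : E4 5 = 0 := rfl
@[simp] lemma E5at0 : E5 0 = 0 := rfl
@[simp] lemma E5at1 : E5 1 = 0 := rfl
@[simp] lemma E5at2 : E5 2 = 0 := rfl
@[simp] lemma E5at3 : E5 3 = 0 := rfl
@[simp] lemma E5at4 : E5 4 = 0 := rfl
@[simp] lemma E5at5 : E5 5 = 1 := rfl

lemma brk (x y : V6) : k23 0 x y =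
    ![x 5 * y 1 - y 5 * x 1, y 5 * x 0 - x 5 * y 0, x 5 * y 3 - y 5 * x 3, 0, 0, 0] := by
  funext i
  fin_cases i <;>
    simp [k23, braa, Matrix.mulVec, dotProduct, Fin.sum_univ_six] <;> first | rfl | ring

lemma expand (v : V6) : v = v 0 • E0 + v 1 • E1 + v 2 • E2 + v 3 • E3 + v 4 • E4 + v 5 • E5 := by
  funext i
  fin_cases i <;> simp [E0,E1,E2,E3,E4,E5]

lemma Japp (J : V6 →ₗ[ℝ] V6) (v : V6) :
    J v = v 0 • J E0 + v 1 • J E1 + v 2 • J E2 + v 3 • J E3 + v 4 • J E4 + v 5 • J E5 := by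
  conv_lhs => rw [expand v]
  simp only [map_add, map_smul]

lemma JL (J : V6 →ₗ[ℝ] V6) (a b c d e f : ℝ) :
    J ![a,b,c,d,e,f] = a • J E0 + b • J E1 + c • J E2 + d • J E3 + e • J E4 + f • J E5 := by
  rw [Japp]; simp

lemma cancel {q a : ℝ} (hq : q ≠ 0) (h : q * a = 0) : a = 0 :=
  (mul_eq_zero.mp h).resolve_left hq

lemma sq_sum_zero {a b : ℝ} (h : a * a + b * b = 0) : a = 0 ∧ b = 0 := by
  constructor <;> nlinarith [sq_nonneg a, sq_nonneg b, h]

set_option maxHeartbeats 1000000 in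
lemma cpx_structure (J : V6 →ₗ[ℝ] V6) (hJJ : ∀ x, J (J x) = -x)
    (hN : ∀ x y, Nij (k23 0) J x y = 0) :
    ∃ β : ℝ, β^2 = 1 ∧
      J E0 = ![0,β,0,0,0,0] ∧ J E1 = ![-β,0,0,0,0,0] ∧
      J E2 = ![0,0,J E2 2,0,J E2 4,0] ∧ J E4 = ![0,0,J E4 2,0,J E4 4,0] ∧
      J E3 5 ≠ 0 := by
  -- λ₀ = λ₁ = 0
  obtain ⟨hlam0, hlam1⟩ : (J E0) 5 = 0 ∧ (J E1) 5 = 0 := by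
    have h := hN E0 E1
    unfold Nij at h
    rw [brk (J E0) (J E1), brk E0 E1, brk (J E0) E1, brk E0 (J E1)] at h
    simp only [E0at0, E0at1, E0at3, E0at5, E1at0, E1at1, E1at3, E1at5] at h
    rw [JL, JL] at h
    have h5 := congrFun h 5
    simp only [Pi.sub_apply, Pi.add_apply, Pi.smul_apply, Pi.zero_apply, smul_eq_mul,
      at0, at1, at2, at3, at4, at5] at h5
    refine sq_sum_zero (a := J E0 5) (b := J E1 5) ?_
    linear_combination -h5
  -- extraction (E2, E3)
  have hC := hN E2 E3
  unfold Nij at hC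
  rw [brk (J E2) (J E3), brk E2 E3, brk (J E2) E3, brk E2 (J E3)] at hC
  simp only [E2at0, E2at1, E2at3, E2at5, E3at0, E3at1, E3at3, E3at5] at hC
  rw [JL, JL] at hC
  have hC0 := congrFun hC 0
  have hC1 := congrFun hC 1
  have hC2 := congrFun hC 2
  have hC5 := congrFun hC 5
  simp only [Pi.sub_apply, Pi.add_apply, Pi.smul_apply, Pi.zero_apply, smul_eq_mul,
    at0, at1, at2, at3, at4, at5, mul_zero, zero_mul, sub_zero, zero_sub, add_zero,
    zero_add, neg_zero, mul_one, one_mul] at hC0 hC1 hC2 hC5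
  -- λ₂ = 0
  have hlam2 : (J E2) 5 = 0 := mul_self_eq_zero.mp (by linear_combination -hC5)
  -- case split on λ₄
  by_cases hlam4 : (J E4) 5 = 0
  case neg =>
    -- contradiction case
    exfalso
    -- extraction (E0, E4)
    have hE := hN E0 E4
    unfold Nij at hE
    rw [brk (J E0) (J E4), brk E0 E4, brk (J E0) E4, brk E0 (J E4)] at hE
    simp only [E0at0, E0at1, E0at3, E0at5, E4at0, E4at1, E4at3, E4at5] at hE
    rw [JL, JL] at hE
    have hE0 := congrFun hE 0
    have hE1 := congrFun hE 1
    have hE2 := congrFun hE 2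
    have hE3 := congrFun hE 3
    have hE4 := congrFun hE 4
    have hE5 := congrFun hE 5
    -- extraction (E1, E4)
    have hF := hN E1 E4
    unfold Nij at hF
    rw [brk (J E1) (J E4), brk E1 E4, brk (J E1) E4, brk E1 (J E4)] at hF
    simp only [E1at0, E1at1, E1at3, E1at5, E4at0, E4at1, E4at3, E4at5] at hF
    rw [JL, JL] at hF
    have hF0 := congrFun hF 0
    have hF1 := congrFun hF 1
    have hF2 := congrFun hF 2
    have hF3 := congrFun hF 3
    have hF4 := congrFun hF 4
    have hF5 := congrFun hF 5
    -- extraction (E3, E4)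
    have hG := hN E3 E4
    unfold Nij at hG
    rw [brk (J E3) (J E4), brk E3 E4, brk (J E3) E4, brk E3 (J E4)] at hG
    simp only [E3at0, E3at1, E3at3, E3at5, E4at0, E4at1, E4at3, E4at5] at hG
    rw [JL, JL] at hG
    have hG3 := congrFun hG 3
    have hG4 := congrFun hG 4
    have hG5 := congrFun hG 5
    simp only [Pi.sub_apply, Pi.add_apply, Pi.smul_apply, Pi.zero_apply, smul_eq_mul,
      at0, at1, at2, at3, at4, at5, hlam0, hlam1, hlam2, mul_zero, zero_mul, sub_zero,
      zero_sub, add_zero, zero_add, neg_zero, mul_one, one_mul, neg_neg,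
      neg_eq_zero] at hE0 hE1 hE2 hE3 hE4 hE5 hF0 hF1 hF2 hF3 hF4 hF5 hG3 hG4 hG5
    -- zero components
    have z03 : J E0 3 = 0 := cancel hlam4 (by linear_combination -hF3)
    have z04 : J E0 4 = 0 := cancel hlam4 (by linear_combination -hF4)
    have z05 : J E0 5 = 0 := hlam0
    have z13 : J E1 3 = 0 := cancel hlam4 (by linear_combination hE3)
    have z14 : J E1 4 = 0 := cancel hlam4 (by linear_combination hE4)
    have z15 : J E1 5 = 0 := hlam1
    have z23 : J E2 3 = 0 := cancel hlam4 (by linear_combination -hG3)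
    have z24 : J E2 4 = 0 := cancel hlam4 (by linear_combination -hG4)
    have z25 : J E2 5 = 0 := hlam2
    -- J ∘ J = -1 components
    have hJ0 := hJJ E0
    have hJ1 := hJJ E1
    have hJ2 := hJJ E2
    rw [Japp J (J E0)] at hJ0
    rw [Japp J (J E1)] at hJ1
    rw [Japp J (J E2)] at hJ2
    have q00 := congrFun hJ0 0
    have q01 := congrFun hJ0 1
    have q02 := congrFun hJ0 2
    have q10 := congrFun hJ1 0
    have q11 := congrFun hJ1 1
    have q12 := congrFun hJ1 2
    have q20 := congrFun hJ2 0
    have q21 := congrFun hJ2 1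
    have q22 := congrFun hJ2 2
    simp only [Pi.sub_apply, Pi.add_apply, Pi.smul_apply, Pi.zero_apply, Pi.neg_apply,
      smul_eq_mul, at0, at1, at2, at3, at4, at5, E0at0, E0at1, E0at2, E1at0, E1at1,
      E1at2, E2at0, E2at1, E2at2, z03, z04, z05, z13, z14, z15, z23, z24, z25,
      mul_zero, zero_mul, sub_zero, zero_sub, add_zero, zero_add, neg_zero, mul_one,
      one_mul] at q00 q01 q02 q10 q11 q12 q20 q21 q22
    set M : Matrix (Fin 3) (Fin 3) ℝ :=
      !![J E0 0, J E1 0, J E2 0; J E0 1, J E1 1, J E2 1; J E0 2, J E1 2, J E2 2] with hM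
    have hMM : M * M = -1 := by
      ext i j
      fin_cases i <;> fin_cases j <;>
        simp [hM, Matrix.mul_apply, Fin.sum_univ_three, Matrix.neg_apply,
          Matrix.one_apply]
      · linear_combination q00
      · linear_combination q10
      · linear_combination q20
      · linear_combination q01
      · linear_combination q11
      · linear_combination q21
      · linear_combination q02
      · linear_combination q12
      · linear_combination q22
    have hdet := congrArg Matrix.det hMM
    rw [Matrix.det_mul] at hdet
    have : (-1 : Matrix (Fin 3) (Fin 3) ℝ).det = -1 := by
      simp [Matrix.det_fin_three]
    rw [this] at hdet
    linarith only [hdet, mul_self_nonneg M.det]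
  case pos =>
    -- main case : λ₄ = 0, λ₃ =: q ≠ 0
    -- extraction (E0, E3)
    have hA := hN E0 E3
    unfold Nij at hA
    rw [brk (J E0) (J E3), brk E0 E3, brk (J E0) E3, brk E0 (J E3)] at hA
    simp only [E0at0, E0at1, E0at3, E0at5, E3at0, E3at1, E3at3, E3at5] at hA
    rw [JL, JL] at hA
    have hA0 := congrFun hA 0
    have hA1 := congrFun hA 1
    have hA2 := congrFun hA 2
    have hA3 := congrFun hA 3
    have hA4 := congrFun hA 4
    have hA5 := congrFun hA 5
    -- extraction (E1, E3)
    have hB := hN E1 E3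
    unfold Nij at hB
    rw [brk (J E1) (J E3), brk E1 E3, brk (J E1) E3, brk E1 (J E3)] at hB
    simp only [E1at0, E1at1, E1at3, E1at5, E3at0, E3at1, E3at3, E3at5] at hB
    rw [JL, JL] at hB
    have hB0 := congrFun hB 0
    have hB1 := congrFun hB 1
    have hB2 := congrFun hB 2
    have hB3 := congrFun hB 3
    have hB4 := congrFun hB 4
    have hB5 := congrFun hB 5
    -- extraction (E4, E3)
    have hD := hN E4 E3
    unfold Nij at hD
    rw [brk (J E4) (J E3), brk E4 E3, brk (J E4) E3, brk E4 (J E3)] at hD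
    simp only [E4at0, E4at1, E4at3, E4at5, E3at0, E3at1, E3at3, E3at5] at hD
    rw [JL, JL] at hD
    have hD0 := congrFun hD 0
    have hD1 := congrFun hD 1
    have hD2 := congrFun hD 2
    simp only [Pi.sub_apply, Pi.add_apply, Pi.smul_apply, Pi.zero_apply, smul_eq_mul,
      at0, at1, at2, at3, at4, at5, hlam0, hlam1, hlam2, hlam4, mul_zero, zero_mul, sub_zero,
      zero_sub, add_zero, zero_add, neg_zero, mul_one, one_mul, neg_neg,
      neg_eq_zero] at hA0 hA1 hA2 hA3 hA4 hA5 hB0 hB1 hB2 hB3 hB4 hB5 hD0 hD1 hD2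
    -- q ≠ 0
    have hJ5 := hJJ E5
    rw [Japp J (J E5)] at hJ5
    have q55 := congrFun hJ5 5
    simp only [Pi.sub_apply, Pi.add_apply, Pi.smul_apply, Pi.zero_apply, Pi.neg_apply,
      smul_eq_mul, at0, at1, at2, at3, at4, at5, E5at5, hlam0, hlam1, hlam2, hlam4,
      mul_zero, zero_mul, sub_zero, zero_sub, add_zero, zero_add, neg_zero, mul_one,
      one_mul] at q55
    have hq : J E3 5 ≠ 0 := by
      intro h0
      rw [h0] at q55
      linarith only [q55, mul_self_nonneg (J E5 5)]
    -- zero components of J E0, J E1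
    have z03 : J E0 3 = 0 := cancel hq (by linear_combination -hB3)
    have z04 : J E0 4 = 0 := cancel hq (by linear_combination -hB4)
    have z05 : J E0 5 = 0 := hlam0
    have z13 : J E1 3 = 0 := cancel hq (by linear_combination hA3)
    have z14 : J E1 4 = 0 := cancel hq (by linear_combination hA4)
    have z15 : J E1 5 = 0 := hlam1
    have z02 : J E0 2 = 0 := cancel hq (by linear_combination hB2 + J E3 5 * z13)
    have z12 : J E1 2 = 0 := cancel hq (by linear_combination -hA2 - J E3 5 * z03)
    have r10 : J E1 0 = -(J E0 1) := by
      have : J E3 5 * (J E1 0 + J E0 1) = 0 := by linear_combination -hA0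
      have := cancel hq this
      linarith
    have r11 : J E1 1 = J E0 0 := by
      have : J E3 5 * (J E1 1 - J E0 0) = 0 := by linear_combination -hA1
      have := cancel hq this
      linarith
    -- zero components of J E2, J E4
    have z20 : J E2 0 = 0 := cancel hq (by linear_combination hC1 + (J E3 0 + J E2 1) * hlam2)
    have z21 : J E2 1 = 0 := cancel hq (by linear_combination -hC0 + (J E3 1 - J E2 0) * hlam2)
    have z23 : J E2 3 = 0 := cancel hq (by linear_combination -hC2 + (J E3 3 - J E2 2) * hlam2)
    have z25 : J E2 5 = 0 := hlam2
    have z40 : J E4 0 = 0 := cancel hq (by linear_combination hD1)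
    have z41 : J E4 1 = 0 := cancel hq (by linear_combination hD0)
    have z43 : J E4 3 = 0 := cancel hq (by linear_combination hD2)
    have z45 : J E4 5 = 0 := hlam4
    -- α = 0, β² = 1
    have hJ0 := hJJ E0
    rw [Japp J (J E0)] at hJ0
    have q00 := congrFun hJ0 0
    have q01 := congrFun hJ0 1
    simp only [Pi.sub_apply, Pi.add_apply, Pi.smul_apply, Pi.zero_apply, Pi.neg_apply,
      smul_eq_mul, at0, at1, at2, at3, at4, at5, E0at0, E0at1, z02, z03, z04, z05,
      z12, z13, z14, z15, z20, z21, z40, z41, r10, r11,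
      mul_zero, zero_mul, sub_zero, zero_sub, add_zero, zero_add, neg_zero, mul_one,
      one_mul] at q00 q01
    -- q00 : α² - β² = -1 (some form), q01 : 2αβ = 0 (some form)
    have h2ab : J E0 0 * J E0 1 = 0 := by linear_combination q01 / 2
    have hal : J E0 0 = 0 := by
      by_contra hne
      have hbe : J E0 1 = 0 := (mul_eq_zero.mp h2ab).resolve_left hne
      rw [hbe] at q00
      linarith only [q00, mul_self_nonneg (J E0 0)]
    have hbe2 : (J E0 1)^2 = 1 := by
      linear_combination (-1 : ℝ) * q00 + J E0 0 * hal
    refine ⟨J E0 1, hbe2, ?_, ?_, ?_, ?_, hq⟩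
    · funext i
      fin_cases i <;> simp [hal, z02, z03, z04, z05]
    · funext i
      fin_cases i <;> simp [r10, r11, hal, z12, z13, z14, z15]
    · funext i
      fin_cases i <;> simp [z20, z21, z23, z25]
    · funext i
      fin_cases i <;> simp [z40, z41, z43, z45]
lemma E2ne : (E2 : V6) ≠ 0 := by
  intro h
  have := congrFun h 2
  rw [E2at2] at this
  simp at this

lemma dC0 (J : V6 →ₗ[ℝ] V6) (g : V6 →ₗ[ℝ] V6 →ₗ[ℝ] ℝ) (y z : V6) :
    dC (k23 0) J g 0 y z = 0 := by
  unfold dC d2 fund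
  simp

lemma main : ¬ ∃ (Jp Jm : V6 →ₗ[ℝ] V6) (g : V6 →ₗ[ℝ] V6 →ₗ[ℝ] ℝ),
    IsGenKahler (k23 0) Jp Jm g := by
  rintro ⟨Jp, Jm, g, ⟨⟨hJJp, hNp⟩, hsym, hpos, hinv⟩, ⟨⟨hJJm, hNm⟩, -, -, hinvm⟩, hsum, hskt⟩
  obtain ⟨b, hb2, hp0, hp1, hp2, hp4, hpq⟩ := cpx_structure Jp hJJp hNp
  -- combination forms
  have hp0' : Jp E0 = b • E1 := by
    rw [hp0]; funext i; fin_cases i <;> simp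
  have hp1' : Jp E1 = (-b) • E0 := by
    rw [hp1]; funext i; fin_cases i <;> simp
  have hp2' : Jp E2 = Jp E2 2 • E2 + Jp E2 4 • E4 := by
    conv_lhs => rw [hp2]
    funext i; fin_cases i <;> simp
  have hp4' : Jp E4 = Jp E4 2 • E2 + Jp E4 4 • E4 := by
    conv_lhs => rw [hp4]
    funext i; fin_cases i <;> simp
  -- J² = -1 on the (2,4) block
  have hj2 := hJJp E2
  have hj4 := hJJp E4
  conv_lhs at hj2 => rw [hp2', map_add, map_smul, map_smul, hp2', hp4']
  conv_lhs at hj4 => rw [hp4', map_add, map_smul, map_smul, hp2', hp4']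
  have hc1 := congrFun hj2 2
  have hc2 := congrFun hj2 4
  have hc3 := congrFun hj4 2
  have hc4 := congrFun hj4 4
  simp only [Pi.add_apply, Pi.smul_apply, Pi.neg_apply, smul_eq_mul,
    E2at2, E2at4, E4at2, E4at4, mul_zero, zero_mul, add_zero, zero_add, mul_one,
    neg_zero] at hc1 hc2 hc3 hc4
  -- determinant of the (2,4) block is 1
  have hdet : Jp E2 2 * Jp E4 4 - Jp E2 4 * Jp E4 2 = 1 := by
    by_cases h : Jp E2 2 + Jp E4 4 = 0
    · linear_combination -hc1 + Jp E2 2 * h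
    · exfalso
      have h4 : Jp E2 4 = 0 := by
        have : Jp E2 4 * (Jp E2 2 + Jp E4 4) = 0 := by linear_combination hc2
        exact (mul_eq_zero.mp this).resolve_right h
      have h2 : Jp E4 2 = 0 := by
        have : Jp E4 2 * (Jp E2 2 + Jp E4 4) = 0 := by linear_combination hc3
        exact (mul_eq_zero.mp this).resolve_right h
      rw [h4, h2] at hc1
      linarith only [hc1, mul_self_nonneg (Jp E2 2)]
  
  -- ideal brackets vanish
  have brId : ∀ x y : V6, x 5 = 0 → y 5 = 0 → k23 0 x y = 0 := by
    intro x y hx hy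
    rw [brk, hx, hy]
    funext i; fin_cases i <;> simp
  have z5p0 : Jp E0 5 = 0 := by rw [hp0]; rfl
  have z5p1 : Jp E1 5 = 0 := by rw [hp1]; rfl
  have z5p2 : Jp E2 5 = 0 := by rw [hp2]; rfl
  have z5p4 : Jp E4 5 = 0 := by rw [hp4]; rfl
  have bp02 : k23 0 (Jp E0) (Jp E2) = 0 := brId _ _ z5p0 z5p2
  have bp04 : k23 0 (Jp E0) (Jp E4) = 0 := brId _ _ z5p0 z5p4
  have bp12 : k23 0 (Jp E1) (Jp E2) = 0 := brId _ _ z5p1 z5p2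
  have bp14 : k23 0 (Jp E1) (Jp E4) = 0 := brId _ _ z5p1 z5p4
  have bp20 : k23 0 (Jp E2) (Jp E0) = 0 := brId _ _ z5p2 z5p0
  have bp21 : k23 0 (Jp E2) (Jp E1) = 0 := brId _ _ z5p2 z5p1
  have bp22 : k23 0 (Jp E2) (Jp E2) = 0 := brId _ _ z5p2 z5p2
  have bp24 : k23 0 (Jp E2) (Jp E4) = 0 := brId _ _ z5p2 z5p4
  -- brackets with Jp E3
  have bp03 : k23 0 (Jp E0) (Jp E3) = (-(Jp E3 5) * b) • E0 := by
    rw [brk, hp0]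
    funext i; fin_cases i <;> simp <;> ring
  have bp13 : k23 0 (Jp E1) (Jp E3) = (-(Jp E3 5) * b) • E1 := by
    rw [brk, hp1]
    funext i; fin_cases i <;> simp <;> ring
  have bp23 : k23 0 (Jp E2) (Jp E3) = 0 := by
    rw [brk, hp2]
    funext i; fin_cases i <;> simp
  have bp43 : k23 0 (Jp E4) (Jp E3) = 0 := by
    rw [brk, hp4]
    funext i; fin_cases i <;> simp
  -- basis brackets
  have bb02 : k23 0 E0 E2 = 0 := brId E0 E2 rfl rfl
  have bb03 : k23 0 E0 E3 = 0 := brId E0 E3 rfl rfl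
  have bb04 : k23 0 E0 E4 = 0 := brId E0 E4 rfl rfl
  have bb12 : k23 0 E1 E2 = 0 := brId E1 E2 rfl rfl
  have bb13 : k23 0 E1 E3 = 0 := brId E1 E3 rfl rfl
  have bb14 : k23 0 E1 E4 = 0 := brId E1 E4 rfl rfl
  have bb23 : k23 0 E2 E3 = 0 := brId E2 E3 rfl rfl
  have bb43 : k23 0 E4 E3 = 0 := brId E4 E3 rfl rfl
  have bb05 : k23 0 E0 E5 = E1 := by
    rw [brk]; funext i; fin_cases i <;> simp [E1]
  have bb15 : k23 0 E1 E5 = ![-1,0,0,0,0,0] := by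
    rw [brk]; funext i; fin_cases i <;> simp
  have bb25 : k23 0 E2 E5 = 0 := by
    rw [brk]; funext i; fin_cases i <;> simp
  have bb45 : k23 0 E4 E5 = 0 := by
    rw [brk]; funext i; fin_cases i <;> simp
  have bb35 : k23 0 E3 E5 = ![0,0,-1,0,0,0] := by
    rw [brk]; funext i; fin_cases i <;> simp
  -- values of dC on key triples
  have HA : dC (k23 0) Jp g E1 E2 E3 = (-(Jp E3 5) * b) * g (Jp E1) (Jp E2) := by
    unfold dC d2 fund
    rw [bp12, bp13, bp23]
    simp [map_smul, smul_eq_mul]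
  have HC : dC (k23 0) Jp g E1 E4 E3 = (-(Jp E3 5) * b) * g (Jp E1) (Jp E4) := by
    unfold dC d2 fund
    rw [bp14, bp13, bp43]
    simp [map_smul, smul_eq_mul]
  have HV2 : dC (k23 0) Jp g ![(-1:ℝ),0,0,0,0,0] E2 E3 =
      (Jp E3 5 * b) * g (Jp E0) (Jp E2) := by
    unfold dC d2 fund
    rw [JL]
    simp only [zero_smul, neg_smul, one_smul, add_zero, zero_add, map_neg,
      LinearMap.neg_apply]
    rw [bp02, bp03, bp23]
    simp [map_smul, smul_eq_mul]
  have HV2b : dC (k23 0) Jp g ![(-1:ℝ),0,0,0,0,0] E4 E3 =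
      (Jp E3 5 * b) * g (Jp E0) (Jp E4) := by
    unfold dC d2 fund
    rw [JL]
    simp only [zero_smul, neg_smul, one_smul, add_zero, zero_add, map_neg,
      LinearMap.neg_apply]
    rw [bp04, bp03, bp43]
    simp [map_smul, smul_eq_mul]
  have HV35a : dC (k23 0) Jp g ![(0:ℝ),0,-1,0,0,0] E0 E2 = 0 := by
    unfold dC d2 fund
    rw [JL]
    simp only [zero_smul, neg_smul, one_smul, add_zero, zero_add, map_neg,
      LinearMap.neg_apply]
    rw [bp20, bp22, bp02]
    simp
  have HV35b : dC (k23 0) Jp g ![(0:ℝ),0,-1,0,0,0] E1 E2 = 0 := by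
    unfold dC d2 fund
    rw [JL]
    simp only [zero_smul, neg_smul, one_smul, add_zero, zero_add, map_neg,
      LinearMap.neg_apply]
    rw [bp21, bp22, bp12]
    simp
  have HV35c : dC (k23 0) Jp g ![(0:ℝ),0,-1,0,0,0] E0 E4 = 0 := by
    unfold dC d2 fund
    rw [JL]
    simp only [zero_smul, neg_smul, one_smul, add_zero, zero_add, map_neg,
      LinearMap.neg_apply]
    rw [bp20, bp24, bp04]
    simp
  have HV35d : dC (k23 0) Jp g ![(0:ℝ),0,-1,0,0,0] E1 E4 = 0 := by
    unfold dC d2 fund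
    rw [JL]
    simp only [zero_smul, neg_smul, one_smul, add_zero, zero_add, map_neg,
      LinearMap.neg_apply]
    rw [bp21, bp24, bp14]
    simp
  -- g-values
  have gval12 : g (Jp E1) (Jp E2) = -b * (Jp E2 2 * g E0 E2 + Jp E2 4 * g E0 E4) := by
    rw [hp1', hp2']
    simp [map_add, map_smul, smul_eq_mul]
    ring
  have gval14 : g (Jp E1) (Jp E4) = -b * (Jp E4 2 * g E0 E2 + Jp E4 4 * g E0 E4) := by
    rw [hp1', hp4']
    simp [map_add, map_smul, smul_eq_mul]
    ring
  have gval02 : g (Jp E0) (Jp E2) = b * (Jp E2 2 * g E1 E2 + Jp E2 4 * g E1 E4) := by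
    rw [hp0', hp2']
    simp [map_add, map_smul, smul_eq_mul]
    ring
  have gval04 : g (Jp E0) (Jp E4) = b * (Jp E4 2 * g E1 E2 + Jp E4 4 * g E1 E4) := by
    rw [hp0', hp4']
    simp [map_add, map_smul, smul_eq_mul]
    ring
  -- the four SKT instances
  have hS1 := hskt E0 E2 E3 E5
  unfold d3 at hS1
  rw [bb02, bb03, bb05, bb23, bb25, bb35, dC0, dC0, dC0, dC0, HA, HV35a, gval12] at hS1
  have k1 : Jp E2 2 * g E0 E2 + Jp E2 4 * g E0 E4 = 0 := by
    refine cancel hpq ?_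
    linear_combination -hS1 - Jp E3 5 * (Jp E2 2 * g E0 E2 + Jp E2 4 * g E0 E4) * hb2
  have hS2 := hskt E1 E2 E3 E5
  unfold d3 at hS2
  rw [bb12, bb13, bb15, bb23, bb25, bb35, dC0, dC0, dC0, dC0, HV2, HV35b, gval02] at hS2
  have k2 : Jp E2 2 * g E1 E2 + Jp E2 4 * g E1 E4 = 0 := by
    refine cancel hpq ?_
    linear_combination -hS2 - Jp E3 5 * (Jp E2 2 * g E1 E2 + Jp E2 4 * g E1 E4) * hb2
  have hS3 := hskt E0 E4 E3 E5
  unfold d3 at hS3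
  rw [bb04, bb03, bb05, bb43, bb45, bb35, dC0, dC0, dC0, dC0, HC, HV35c, gval14] at hS3
  have k3 : Jp E4 2 * g E0 E2 + Jp E4 4 * g E0 E4 = 0 := by
    refine cancel hpq ?_
    linear_combination -hS3 - Jp E3 5 * (Jp E4 2 * g E0 E2 + Jp E4 4 * g E0 E4) * hb2
  have hS4 := hskt E1 E4 E3 E5
  unfold d3 at hS4
  rw [bb14, bb13, bb15, bb43, bb45, bb35, dC0, dC0, dC0, dC0, HV2b, HV35d, gval04] at hS4
  have k4 : Jp E4 2 * g E1 E2 + Jp E4 4 * g E1 E4 = 0 := by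
    refine cancel hpq ?_
    linear_combination -hS4 - Jp E3 5 * (Jp E4 2 * g E1 E2 + Jp E4 4 * g E1 E4) * hb2
  -- orthogonality facts
  have g02 : g E0 E2 = 0 := by
    have h : (Jp E2 2 * Jp E4 4 - Jp E2 4 * Jp E4 2) * g E0 E2 = 0 := by
      linear_combination Jp E4 4 * k1 - Jp E2 4 * k3
    rw [hdet] at h
    linarith only [h]
  have g04 : g E0 E4 = 0 := by
    have h : (Jp E2 2 * Jp E4 4 - Jp E2 4 * Jp E4 2) * g E0 E4 = 0 := by
      linear_combination Jp E2 2 * k3 - Jp E4 2 * k1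
    rw [hdet] at h
    linarith only [h]
  have g12 : g E1 E2 = 0 := by
    have h : (Jp E2 2 * Jp E4 4 - Jp E2 4 * Jp E4 2) * g E1 E2 = 0 := by
      linear_combination Jp E4 4 * k2 - Jp E2 4 * k4
    rw [hdet] at h
    linarith only [h]
  have g14 : g E1 E4 = 0 := by
    have h : (Jp E2 2 * Jp E4 4 - Jp E2 4 * Jp E4 2) * g E1 E4 = 0 := by
      linear_combination Jp E2 2 * k4 - Jp E4 2 * k2
    rw [hdet] at h
    linarith only [h]
  
  -- relations for Jp E3 / Jp E5 from J² = -1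
  have hj3 := hJJp E3
  conv_lhs at hj3 => rw [Japp Jp (Jp E3)]
  have e3c := congrFun hj3 3
  have e5c := congrFun hj3 5
  have z3p2 : Jp E2 3 = 0 := by rw [hp2]; rfl
  have z3p4 : Jp E4 3 = 0 := by rw [hp4]; rfl
  simp only [Pi.add_apply, Pi.smul_apply, Pi.neg_apply, smul_eq_mul, hp0, hp1,
    z3p2, z5p2, z3p4, z5p4,
    at0, at1, at2, at3, at4, at5, E3at3, E3at5, mul_zero, zero_mul, add_zero, zero_add,
    neg_zero] at e3c e5c
  have hu5 : Jp E5 5 = -(Jp E3 3) := by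
    have h : Jp E3 3 + Jp E5 5 = 0 := cancel hpq (by linear_combination e5c)
    linarith only [h]
  have C2p : k23 0 (Jp E2) (Jp E5) = 0 := by
    rw [brk, hp2]; funext i; fin_cases i <;> simp
  have gp02 : g (Jp E0) (Jp E2) = 0 := by rw [gval02, g12, g14]; ring
  have gp12 : g (Jp E1) (Jp E2) = 0 := by rw [gval12, g02, g04]; ring
  have hXp : dC (k23 0) Jp g E2 E3 E5 = g E2 E2 := by
    unfold dC d2 fund
    rw [bp23, C2p, brk (Jp E3) (Jp E5), JL]
    simp only [map_zero, LinearMap.zero_apply, map_add, map_smul, LinearMap.add_apply,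
      LinearMap.smul_apply, smul_eq_mul, zero_smul, add_zero, zero_add, neg_zero,
      mul_zero, zero_mul, sub_zero, zero_sub]
    rw [gp02, gp12, hinv E2 E2]
    linear_combination (-(g E2 E2)) * e3c + Jp E3 3 * g E2 E2 * hu5
  -- the same for Jm
  obtain ⟨bm, hbm2, hm0, hm1, hm2, hm4, hmq⟩ := cpx_structure Jm hJJm hNm
  have hm0' : Jm E0 = bm • E1 := by
    rw [hm0]; funext i; fin_cases i <;> simp
  have hm1' : Jm E1 = (-bm) • E0 := by
    rw [hm1]; funext i; fin_cases i <;> simp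
  have hm2' : Jm E2 = Jm E2 2 • E2 + Jm E2 4 • E4 := by
    conv_lhs => rw [hm2]
    funext i; fin_cases i <;> simp
  have hmj3 := hJJm E3
  conv_lhs at hmj3 => rw [Japp Jm (Jm E3)]
  have f3c := congrFun hmj3 3
  have f5c := congrFun hmj3 5
  have z3m2 : Jm E2 3 = 0 := by rw [hm2]; rfl
  have z5m2 : Jm E2 5 = 0 := by rw [hm2]; rfl
  have z3m4 : Jm E4 3 = 0 := by rw [hm4]; rfl
  have z5m4 : Jm E4 5 = 0 := by rw [hm4]; rfl
  simp only [Pi.add_apply, Pi.smul_apply, Pi.neg_apply, smul_eq_mul, hm0, hm1,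
    z3m2, z5m2, z3m4, z5m4,
    at0, at1, at2, at3, at4, at5, E3at3, E3at5, mul_zero, zero_mul, add_zero, zero_add,
    neg_zero] at f3c f5c
  have hu5m : Jm E5 5 = -(Jm E3 3) := by
    have h : Jm E3 3 + Jm E5 5 = 0 := cancel hmq (by linear_combination f5c)
    linarith only [h]
  have bm23 : k23 0 (Jm E2) (Jm E3) = 0 := by
    rw [brk, hm2]; funext i; fin_cases i <;> simp
  have C2m : k23 0 (Jm E2) (Jm E5) = 0 := by
    rw [brk, hm2]; funext i; fin_cases i <;> simp
  have gm02 : g (Jm E0) (Jm E2) = 0 := by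
    rw [hm0', hm2']
    simp [map_add, map_smul, smul_eq_mul, g12, g14]
  have gm12 : g (Jm E1) (Jm E2) = 0 := by
    rw [hm1', hm2']
    simp [map_add, map_smul, smul_eq_mul, g02, g04]
  have hXm : dC (k23 0) Jm g E2 E3 E5 = g E2 E2 := by
    unfold dC d2 fund
    rw [bm23, C2m, brk (Jm E3) (Jm E5), JL]
    simp only [map_zero, LinearMap.zero_apply, map_add, map_smul, LinearMap.add_apply,
      LinearMap.smul_apply, smul_eq_mul, zero_smul, add_zero, zero_add, neg_zero,
      mul_zero, zero_mul, sub_zero, zero_sub]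
    rw [gm02, gm12, hinvm E2 E2]
    linear_combination (-(g E2 E2)) * f3c + Jm E3 3 * g E2 E2 * hu5m
  -- conclusion
  have hfin := hsum E2 E3 E5
  rw [hXp, hXm] at hfin
  linarith only [hfin, hpos E2 E2ne]

end GK

/-- The Lie algebra `𝔨₂₃⁰` admits no generalized Kähler structure. -/
theorem stmt_13 :
    ¬ ∃ (Jp Jm : V6 →ₗ[ℝ] V6) (g : V6 →ₗ[ℝ] V6 →ₗ[ℝ] ℝ),
      IsGenKahler (k23 0) Jp Jm g :=
  GK.main
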